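/- arXiv:2103.11234 — 4 statements merged into one kernel-verified Lean document; each statement's English description precedes it below -/
import Mathlib

section
/- The vector field K₄ = λ²y∂x − x∂y − (1/2)(λ²y² − x²)∂z is a Killing vector field for the metric g = (1/λ²)dx² + dy² + (x dy + dz)² on ℝ³. -/
noncomputable section

/-- The Heisenberg metric g = (1/λ²)dx² + dy² + (x dy + dz)². -/
def gH (l : ℝ) (p v w : ℝ × ℝ × ℝ) : ℝ :=
  (1 / l ^ 2) * v.1 * w.1 + v.2.1 * w.2.1 +
    (p.1 * v.2.1 + v.2.2) * (p.1 * w.2.1 + w.2.2)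

/-- Lie bracket of vector fields on ℝ³. -/
def bracket (X Y : ℝ × ℝ × ℝ → ℝ × ℝ × ℝ) : ℝ × ℝ × ℝ → ℝ × ℝ × ℝ :=
  fun p => fderiv ℝ Y p (X p) - fderiv ℝ X p (Y p)

/-- The function p ↦ g_p(X p, Y p). -/
def gf (l : ℝ) (X Y : ℝ × ℝ × ℝ → ℝ × ℝ × ℝ) (p : ℝ × ℝ × ℝ) : ℝ :=
  gH l p (X p) (Y p)

/-- Directional derivative of a function along a vector field: (X·f)(p). -/
def dirD (X : ℝ × ℝ × ℝ → ℝ × ℝ × ℝ) (f : ℝ × ℝ × ℝ → ℝ) (p : ℝ × ℝ × ℝ) : ℝ :=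
  fderiv ℝ f p (X p)

/-- The Koszul expression, equal to 2g(∇_X Y, Z) for the Levi-Civita connection ∇. -/
def koszul (l : ℝ) (X Y Z : ℝ × ℝ × ℝ → ℝ × ℝ × ℝ) (p : ℝ × ℝ × ℝ) : ℝ :=
  dirD X (gf l Y Z) p + dirD Y (gf l X Z) p - dirD Z (gf l X Y) p
    + gf l (bracket X Y) Z p - gf l (bracket X Z) Y p - gf l (bracket Y Z) X p

/-- g(∇_X Y, Z), via the Koszul formula for the Levi-Civita connection of g. -/
def covInner (l : ℝ) (X Y Z : ℝ × ℝ × ℝ → ℝ × ℝ × ℝ) (p : ℝ × ℝ × ℝ) : ℝ :=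
  (1 / 2) * koszul l X Y Z p

/-- The Killing vector field K₄ = λ²y∂x − x∂y − (1/2)(λ²y² − x²)∂z. -/
def K4 (l : ℝ) : ℝ × ℝ × ℝ → ℝ × ℝ × ℝ :=
  fun p => (l ^ 2 * p.2.1, -p.1, -(1 / 2) * (l ^ 2 * p.2.1 ^ 2 - p.1 ^ 2))

/-- K₄ is a Killing field of g: g(∇_X K₄, Y) + g(∇_Y K₄, X) = 0
for all (smooth) vector fields X, Y. -/
theorem K4_killing (l : ℝ) (hl : 0 < l)
    (X Y : ℝ × ℝ × ℝ → ℝ × ℝ × ℝ)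
    (hX : ContDiff ℝ (⊤ : ℕ∞) X) (hY : ContDiff ℝ (⊤ : ℕ∞) Y) (p : ℝ × ℝ × ℝ) :
    covInner l X (K4 l) Y p + covInner l Y (K4 l) X p = 0 := by
  have hXd : HasFDerivAt X (fderiv ℝ X p) p :=
    ((hX.differentiable (by simp)) p).hasFDerivAt
  have hYd : HasFDerivAt Y (fderiv ℝ Y p) p :=
    ((hY.differentiable (by simp)) p).hasFDerivAt
  -- symmetry of the metric
  have gsymm : ∀ Z W : ℝ × ℝ × ℝ → ℝ × ℝ × ℝ, gf l Z W = gf l W Z := by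
    intro Z W; funext q; simp only [gf, gH]; ring
  -- antisymmetry of the bracket inside gf
  have gbr : ∀ Z W V : ℝ × ℝ × ℝ → ℝ × ℝ × ℝ,
      gf l (bracket Z W) V p = -(gf l (bracket W Z) V p) := by
    intro Z W V
    simp only [gf, gH, bracket, Prod.fst_sub, Prod.snd_sub]; ring
  -- derivative of K4
  have hKeq : K4 l = (fun q : ℝ × ℝ × ℝ =>
      (l ^ 2 * q.2.1, -q.1, -(1 / 2) * (l ^ 2 * (q.2.1 * q.2.1) - q.1 * q.1))) := by
    funext q; simp only [K4, Prod.mk.injEq]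
    refine ⟨by simp, by simp, by ring⟩
  have h1 : HasFDerivAt (fun q : ℝ × ℝ × ℝ => q.1)
      (ContinuousLinearMap.fst ℝ ℝ (ℝ × ℝ)) p := hasFDerivAt_fst
  have h2 := (hasFDerivAt_snd (𝕜 := ℝ) (p := p)).fst
  have hK := ((h2.const_mul (l ^ 2)).prodMk (h1.neg.prodMk
    ((((h2.mul h2).const_mul (l ^ 2)).sub (h1.mul h1)).const_mul (-(1 / 2)))))
  have hKv : ∀ v : ℝ × ℝ × ℝ, fderiv ℝ (K4 l) p v
      = (l ^ 2 * v.2.1, -v.1, -(l ^ 2 * p.2.1 * v.2.1 - p.1 * v.1)) := by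
    intro v
    erw [hKeq, hK.fderiv]
    simp
    ring_nf
  -- derivative of gf l X Y
  have hx1 := hXd.fst
  have hx2 := hXd.snd.fst
  have hx3 := hXd.snd.snd
  have hy1 := hYd.fst
  have hy2 := hYd.snd.fst
  have hy3 := hYd.snd.snd
  have hgf := (((hx1.const_mul (1 / l ^ 2)).mul hy1).add (hx2.mul hy2)).add
    (((h1.mul hx2).add hx3).mul ((h1.mul hy2).add hy3))
  have hgfeq : gf l X Y = (fun q : ℝ × ℝ × ℝ =>
      (1 / l ^ 2) * (X q).1 * (Y q).1 + (X q).2.1 * (Y q).2.1 +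
        (q.1 * (X q).2.1 + (X q).2.2) * (q.1 * (Y q).2.1 + (Y q).2.2)) := rfl
  have key : dirD (K4 l) (gf l X Y) p
      = gf l (bracket (K4 l) X) Y p + gf l (bracket (K4 l) Y) X p := by
    have hdiff : DifferentiableAt ℝ (gf l X Y) p := by
      rw [hgfeq]; exact hgf.differentiableAt
    simp only [dirD, hgfeq]
    erw [hgf.fderiv]
    simp only [gf, gH, bracket, Prod.fst_sub, Prod.snd_sub, hKv]
    simp [K4]
    have h0 : l ≠ 0 := ne_of_gt hl
    field_simp
    ring
  -- combine
  simp only [covInner, koszul]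
  rw [gsymm X (K4 l), gsymm Y (K4 l), gsymm Y X,
    gbr X (K4 l) Y, gbr Y (K4 l) X, gbr Y X]
  linarith [key]
end
end

section
/- The vector field K₃ = ∂x − y∂z is a Killing vector field for the metric g = (1/λ²)dx² + dy² + (x dy + dz)² on ℝ³. -/
noncomputable section

/-- The Killing vector field K₃ = ∂x − y∂z. -/
def K3 : ℝ × ℝ × ℝ → ℝ × ℝ × ℝ := fun p => (1, 0, -p.2.1)


lemma fderiv_gf (l : ℝ) {X Y : ℝ × ℝ × ℝ → ℝ × ℝ × ℝ} {p : ℝ × ℝ × ℝ}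
    {A B : (ℝ × ℝ × ℝ) →L[ℝ] ℝ × ℝ × ℝ}
    (hX : HasFDerivAt X A p) (hY : HasFDerivAt Y B p) (v : ℝ × ℝ × ℝ) :
    fderiv ℝ (gf l X Y) p v =
      gH l p (A v) (Y p) + gH l p (X p) (B v) +
        v.1 * ((X p).2.1 * (p.1 * (Y p).2.1 + (Y p).2.2) +
               (Y p).2.1 * (p.1 * (X p).2.1 + (X p).2.2)) := by
  have hx1 := hX.fst
  have hx2 := hX.snd.fst
  have hx3 := hX.snd.snd
  have hy1 := hY.fst
  have hy2 := hY.snd.fst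
  have hy3 := hY.snd.snd
  have hfst : HasFDerivAt (fun q : ℝ × ℝ × ℝ => q.1)
      (ContinuousLinearMap.fst ℝ ℝ (ℝ × ℝ)) p := hasFDerivAt_fst
  have h := (((hx1.const_mul (1/l^2)).mul hy1).add (hx2.mul hy2)).add
      (((hfst.mul hx2).add hx3).mul ((hfst.mul hy2).add hy3))
  have h2 : HasFDerivAt (gf l X Y) _ p := h
  rw [h2.fderiv]
  simp [gH, ContinuousLinearMap.add_apply, ContinuousLinearMap.smul_apply,
    ContinuousLinearMap.comp_apply, smul_eq_mul]
  ring

/-- The (constant) total derivative of K₃. -/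
def LK : (ℝ × ℝ × ℝ) →L[ℝ] ℝ × ℝ × ℝ :=
  (0 : (ℝ × ℝ × ℝ) →L[ℝ] ℝ).prod ((0 : (ℝ × ℝ × ℝ) →L[ℝ] ℝ).prod
    (-((ContinuousLinearMap.fst ℝ ℝ ℝ).comp (ContinuousLinearMap.snd ℝ ℝ (ℝ × ℝ)))))

lemma LK_apply (v : ℝ × ℝ × ℝ) : LK v = (0, 0, -v.2.1) := by
  simp [LK]

lemma hasFDerivAt_K3 (p : ℝ × ℝ × ℝ) : HasFDerivAt K3 LK p := by
  have : K3 = fun q : ℝ × ℝ × ℝ => ((1 : ℝ), (0 : ℝ), (0 : ℝ)) + LK q := by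
    funext q
    simp [K3, LK, Prod.ext_iff]
  rw [this]
  exact (LK.hasFDerivAt).const_add _

/-- K₃ = ∂x − y∂z is a Killing field of g: g(∇_X K₃, Y) + g(∇_Y K₃, X) = 0
for all (smooth) vector fields X, Y. -/
theorem K3_killing (l : ℝ) (hl : 0 < l)
    (X Y : ℝ × ℝ × ℝ → ℝ × ℝ × ℝ)
    (hX : ContDiff ℝ (⊤ : ℕ∞) X) (hY : ContDiff ℝ (⊤ : ℕ∞) Y) (p : ℝ × ℝ × ℝ) :
    covInner l X K3 Y p + covInner l Y K3 X p = 0 := by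
  have hXd : HasFDerivAt X (fderiv ℝ X p) p :=
    (hX.differentiable (by simp)).differentiableAt.hasFDerivAt
  have hYd : HasFDerivAt Y (fderiv ℝ Y p) p :=
    (hY.differentiable (by simp)).differentiableAt.hasFDerivAt
  have hKd := hasFDerivAt_K3 p
  have hKf : fderiv ℝ K3 p = LK := hKd.fderiv
  set A := fderiv ℝ X p
  set B := fderiv ℝ Y p
  unfold covInner koszul dirD
  rw [fderiv_gf l hKd hYd, fderiv_gf l hXd hYd, fderiv_gf l hXd hKd,
      fderiv_gf l hKd hXd, fderiv_gf l hYd hXd, fderiv_gf l hYd hKd]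
  unfold gf bracket
  rw [hKf]
  simp only [K3, LK_apply, gH, Prod.fst_sub, Prod.snd_sub, Prod.mk.injEq,
    map_sub]
  simp only [A, B]
  ring_nf
end
end

section
/- For real constants c, c₁, c₂, c₃, c₄, c₅ with c ≠ 0, the curve γ(t) = (x(t), y(t), z(t)) with x(t) = −(c₁/c)e^{cλt} − (c₂/c)e^{−cλt} + c₃, y(t) = (c₁/(cλ))e^{cλt} − (c₂/(cλ))e^{−cλt} + c₄ satisfies x″ + λ²y′(z′ + xy′) = 0 and y″ + x′(z′ + xy′) = 0 whenever z is chosen so that z′ + xy′ ≡ c on ℝ; equivalently, any curve with these x, y components and z′ = c − xy′ is a geodesic of the metric g = (1/λ²)dx² + dy² + (x dy + dz)² on ℝ³. -/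
noncomputable section

/-- For c ≠ 0, the curve with x(t) = −(c₁/c)e^{cλt} − (c₂/c)e^{−cλt} + c₃,
y(t) = (c₁/(cλ))e^{cλt} − (c₂/(cλ))e^{−cλt} + c₄ and any z with
z′ = c − xy′ (i.e. z′ + xy′ ≡ c) is a geodesic of the Heisenberg metric:
y″ + x′(z′ + xy′) = 0, x″ + λ²y′(z′ + xy′) = 0 and (z′ + xy′)′ = 0. -/
theorem stmt9 (l c c₁ c₂ c₃ c₄ : ℝ) (hl : 0 < l) (hc : c ≠ 0)
    (x y z : ℝ → ℝ)
    (hx : x = fun t => -(c₁ / c) * Real.exp (c * l * t)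
      - (c₂ / c) * Real.exp (-(c * l * t)) + c₃)
    (hy : y = fun t => (c₁ / (c * l)) * Real.exp (c * l * t)
      - (c₂ / (c * l)) * Real.exp (-(c * l * t)) + c₄)
    (hz : ∀ t, deriv z t = c - x t * deriv y t) :
    (∀ t, deriv (deriv y) t + deriv x t * (deriv z t + x t * deriv y t) = 0) ∧
    (∀ t, deriv (deriv x) t + l ^ 2 * deriv y t * (deriv z t + x t * deriv y t) = 0) ∧
    (∀ t, deriv (fun s => deriv z s + x s * deriv y s) t = 0) := by
  have hl0 : l ≠ 0 := ne_of_gt hl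
  have hE : ∀ t, HasDerivAt (fun t => Real.exp (c * l * t))
      (c * l * Real.exp (c * l * t)) t := by
    intro t
    simpa [mul_comm] using (((hasDerivAt_id t).const_mul (c * l)).exp)
  have hF : ∀ t, HasDerivAt (fun t => Real.exp (-(c * l * t)))
      (-(c * l) * Real.exp (-(c * l * t))) t := by
    intro t
    simpa [mul_comm] using ((((hasDerivAt_id t).const_mul (c * l)).neg).exp)
  have hxd : ∀ t, HasDerivAt x
      (-(c₁ * l) * Real.exp (c * l * t) + (c₂ * l) * Real.exp (-(c * l * t))) t := by
    intro t
    rw [hx]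
    have := ((((hE t).const_mul (-(c₁ / c))).sub ((hF t).const_mul (c₂ / c))).add_const c₃)
    convert this using 1
    · rfl
    · rfl
    · rfl
    field_simp
    ring
  have hyd : ∀ t, HasDerivAt y
      (c₁ * Real.exp (c * l * t) + c₂ * Real.exp (-(c * l * t))) t := by
    intro t
    rw [hy]
    have := ((((hE t).const_mul (c₁ / (c * l))).sub ((hF t).const_mul (c₂ / (c * l)))).add_const c₄)
    convert this using 1
    · rfl
    · rfl
    · rfl
    field_simp
    ring
  have hdx : deriv x = fun t =>
      -(c₁ * l) * Real.exp (c * l * t) + (c₂ * l) * Real.exp (-(c * l * t)) :=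
    funext fun t => (hxd t).deriv
  have hdy : deriv y = fun t =>
      c₁ * Real.exp (c * l * t) + c₂ * Real.exp (-(c * l * t)) :=
    funext fun t => (hyd t).deriv
  have hddx : ∀ t, deriv (deriv x) t =
      -(c₁ * l) * (c * l * Real.exp (c * l * t))
        + (c₂ * l) * (-(c * l) * Real.exp (-(c * l * t))) := by
    intro t
    rw [hdx]
    exact (((hE t).const_mul (-(c₁ * l))).add ((hF t).const_mul (c₂ * l))).deriv
  have hddy : ∀ t, deriv (deriv y) t =
      c₁ * (c * l * Real.exp (c * l * t)) + c₂ * (-(c * l) * Real.exp (-(c * l * t))) := by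
    intro t
    rw [hdy]
    exact (((hE t).const_mul c₁).add ((hF t).const_mul c₂)).deriv
  have hcz : ∀ t, deriv z t + x t * deriv y t = c := by
    intro t; rw [hz t]; ring
  refine ⟨fun t => ?_, fun t => ?_, fun t => ?_⟩
  · rw [hddy t, hcz t, hdx]; ring
  · rw [hddx t, hcz t, hdy]; ring
  · have : (fun s => deriv z s + x s * deriv y s) = fun _ => c := funext fun s => hcz s
    rw [this, deriv_const]
end
end

section
/- For real constants c₁,…,c₅, the curve γ(t) with x(t) = c₁t + c₂, y(t) = −(c₁/λ)t² + c₃t + c₄, z(t) = (2c₁²/(3λ))t³ + c₁(c₂/λ − c₃/2)t² + (1/λ − c₂c₃)t + c₅ satisfies the K₁-magnetic system: y″ + x′((z′+xy′) + 1/λ) = 0, x″ + y′(λ²(z′+xy′) − λ) = 0, and z′ + xy′ = 1/λ identically. -/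
noncomputable section

/-- The curve with x(t) = c₁t + c₂, y(t) = −(c₁/λ)t² + c₃t + c₄,
z(t) = (2c₁²/(3λ))t³ + c₁(c₂/λ − c₃/2)t² + (1/λ − c₂c₃)t + c₅ satisfies the
K₁-magnetic system y″ + x′((z′+xy′) + 1/λ) = 0, x″ + y′(λ²(z′+xy′) − λ) = 0,
and z′ + xy′ = 1/λ identically. -/
theorem stmt11 (l c₁ c₂ c₃ c₄ c₅ : ℝ) (hl : 0 < l)
    (x y z : ℝ → ℝ)
    (hx : x = fun t => c₁ * t + c₂)
    (hy : y = fun t => -(c₁ / l) * t ^ 2 + c₃ * t + c₄)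
    (hz : z = fun t => (2 * c₁ ^ 2 / (3 * l)) * t ^ 3
      + c₁ * (c₂ / l - c₃ / 2) * t ^ 2 + (1 / l - c₂ * c₃) * t + c₅) :
    (∀ t, deriv (deriv y) t
      + deriv x t * ((deriv z t + x t * deriv y t) + 1 / l) = 0) ∧
    (∀ t, deriv (deriv x) t
      + deriv y t * (l ^ 2 * (deriv z t + x t * deriv y t) - l) = 0) ∧
    (∀ t, deriv z t + x t * deriv y t = 1 / l) := by
  have hl' : l ≠ 0 := ne_of_gt hl
  have hx' : ∀ t, HasDerivAt x c₁ t := by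
    intro t; rw [hx]
    simpa using ((hasDerivAt_id t).const_mul c₁).add_const c₂
  have hy' : ∀ t, HasDerivAt y (-(c₁ / l) * (2 * t) + c₃) t := by
    intro t; rw [hy]
    have h1 : HasDerivAt (fun t : ℝ => -(c₁ / l) * t ^ 2) (-(c₁ / l) * (2 * t)) t := by
      simpa [mul_comm] using (hasDerivAt_pow 2 t).const_mul (-(c₁ / l))
    have h2 : HasDerivAt (fun t : ℝ => c₃ * t) c₃ t := by
      simpa using (hasDerivAt_id t).const_mul c₃
    simpa using (h1.add h2).add_const c₄
  have hz' : ∀ t, HasDerivAt z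
      ((2 * c₁ ^ 2 / (3 * l)) * (3 * t ^ 2) + c₁ * (c₂ / l - c₃ / 2) * (2 * t)
        + (1 / l - c₂ * c₃)) t := by
    intro t; rw [hz]
    have h1 : HasDerivAt (fun t : ℝ => (2 * c₁ ^ 2 / (3 * l)) * t ^ 3)
        ((2 * c₁ ^ 2 / (3 * l)) * (3 * t ^ 2)) t := by
      have := (hasDerivAt_pow 3 t).const_mul (2 * c₁ ^ 2 / (3 * l))
      exact this.congr_deriv (by norm_num)
    have h2 : HasDerivAt (fun t : ℝ => c₁ * (c₂ / l - c₃ / 2) * t ^ 2)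
        (c₁ * (c₂ / l - c₃ / 2) * (2 * t)) t := by
      simpa [mul_comm] using (hasDerivAt_pow 2 t).const_mul (c₁ * (c₂ / l - c₃ / 2))
    have h3 : HasDerivAt (fun t : ℝ => (1 / l - c₂ * c₃) * t) (1 / l - c₂ * c₃) t := by
      simpa using (hasDerivAt_id t).const_mul (1 / l - c₂ * c₃)
    simpa using ((h1.add h2).add h3).add_const c₅
  have dx : deriv x = fun _ => c₁ := funext fun t => (hx' t).deriv
  have dy : deriv y = fun t => -(c₁ / l) * (2 * t) + c₃ := funext fun t => (hy' t).deriv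
  have dz : deriv z = fun t => (2 * c₁ ^ 2 / (3 * l)) * (3 * t ^ 2)
      + c₁ * (c₂ / l - c₃ / 2) * (2 * t) + (1 / l - c₂ * c₃) :=
    funext fun t => (hz' t).deriv
  have ddx : deriv (deriv x) = fun _ => (0 : ℝ) := by
    rw [dx]; funext t; simp
  have ddy : deriv (deriv y) = fun _ => -(c₁ / l) * 2 := by
    rw [dy]; funext t
    have h : HasDerivAt (fun t : ℝ => -(c₁ / l) * (2 * t) + c₃) (-(c₁ / l) * 2) t := by
      simpa [mul_assoc] using (((hasDerivAt_id t).const_mul 2).const_mul (-(c₁ / l))).add_const c₃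
    exact h.deriv
  have key : ∀ t, deriv z t + x t * deriv y t = 1 / l := by
    intro t
    rw [dz, dy, hx]
    field_simp
    ring
  refine ⟨?_, ?_, key⟩
  · intro t
    rw [key t, ddy, dx]
    field_simp
    ring
  · intro t
    rw [key t, ddx, dy]
    field_simp
    ring
end
end
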